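/- (Fenchel's theorem) Let E be a real normed vector space with finite dimension F ≥ 1, and let S ⊆ E be a nonempty compact, path-connected set. Then every point x ∈ convexHull ℝ S can be written as a convex combination of at most F points of S: there exist w : Fin F → ℝ nonnegative with ∑_i w i = 1 and s : Fin F → E with s i ∈ S for all i, such that x = ∑_i w i • s i. -/

import Mathlib

open Finset

/-- Padding lemma: a convex combination of `m ≤ F` points can be written with `F` points. -/
lemma fenchel_pad {E : Type*} [NormedAddCommGroup E] [NormedSpace ℝ E]
    (F m : ℕ) (hm : m ≤ F) (S : Set E) (hS : S.Nonempty) (x : E)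
    (w : Fin m → ℝ) (s : Fin m → E)
    (hw0 : ∀ i, 0 ≤ w i) (hw1 : ∑ i, w i = 1)
    (hs : ∀ i, s i ∈ S) (hxx : x = ∑ i, w i • s i) :
    ∃ (w' : Fin F → ℝ) (s' : Fin F → E),
      (∀ i, 0 ≤ w' i) ∧ (∑ i, w' i = 1) ∧
      (∀ i, s' i ∈ S) ∧ x = ∑ i, w' i • s' i := by
  obtain ⟨s0, hs0⟩ := hS
  classical
  set W : ℕ → ℝ := fun n => if h : n < m then w ⟨n, h⟩ else 0 with hW
  set P : ℕ → E := fun n => if h : n < m then s ⟨n, h⟩ else s0 with hP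
  have hWn : ∀ n, ¬ n < m → W n = 0 := by intro n h; simp [hW, h]
  have hsumW : ∑ i : Fin F, W i = ∑ i : Fin m, w i := by
    rw [Fin.sum_univ_eq_sum_range W F,
      ← Finset.sum_subset (Finset.range_subset_range.2 hm)
        (fun n _ hn => hWn n (by simpa using hn)),
      ← Fin.sum_univ_eq_sum_range W m]
    refine Finset.sum_congr rfl fun i _ => ?_
    simp [hW, i.isLt]
  have hsumWP : ∑ i : Fin F, W i • P i = ∑ i : Fin m, w i • s i := by
    rw [Fin.sum_univ_eq_sum_range (fun n => W n • P n) F,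
      ← Finset.sum_subset (Finset.range_subset_range.2 hm)
        (fun n _ hn => by rw [hWn n (by simpa using hn), zero_smul]),
      ← Fin.sum_univ_eq_sum_range (fun n => W n • P n) m]
    refine Finset.sum_congr rfl fun i _ => ?_
    simp [hW, hP, i.isLt]
  refine ⟨fun i => W i, fun i => P i, fun i => ?_, by rw [hsumW, hw1], fun i => ?_,
    by rw [hsumWP, hxx]⟩
  · by_cases h : (i : ℕ) < m <;> simp [hW, h, hw0]
  · by_cases h : (i : ℕ) < m <;> simp [hP, h, hs, hs0]


set_option maxHeartbeats 1000000

/-- Fenchel's theorem: in a real normed space of finite dimension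
`F ≥ 1`, every point of the convex hull of a nonempty compact path-connected set `S`
is a convex combination of at most `F` points of `S`. -/
theorem fenchel_caratheodory_for_connected_sets
    {E : Type*} [NormedAddCommGroup E] [NormedSpace ℝ E] [FiniteDimensional ℝ E]
    (F : ℕ) (hF : 1 ≤ F) (hdim : Module.finrank ℝ E = F)
    (S : Set E) (hS : S.Nonempty) (hcomp : IsCompact S)
    (hpath : IsPathConnected S)
    (x : E) (hx : x ∈ convexHull ℝ S) :
    ∃ (w : Fin F → ℝ) (s : Fin F → E),
      (∀ i, 0 ≤ w i) ∧ (∑ i, w i = 1) ∧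
      (∀ i, s i ∈ S) ∧ x = ∑ i, w i • s i := by
  classical
  obtain ⟨ι, hιfin, z, lam, hzS, hzind, hlampos, hlamsum, hlamx⟩ :=
    eq_pos_convex_span_of_mem_convexHull hx
  have hcard : Fintype.card ι ≤ F + 1 := by
    have h1 := hzind.card_le_finrank_succ
    have h2 : Module.finrank ℝ (vectorSpan ℝ (Set.range z)) ≤ F := by
      rw [← hdim]; exact Submodule.finrank_le _
    omega
  rcases lt_or_eq_of_le hcard with hlt | heq
  · -- at most F points: pad
    have hm : Fintype.card ι ≤ F := by omega
    obtain e := (Fintype.equivFin ι).symm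
    exact fenchel_pad F (Fintype.card ι) hm S hS x (lam ∘ e) (z ∘ e)
      (fun i => (hlampos (e i)).le) ((Equiv.sum_comp e lam).trans hlamsum)
      (fun i => hzS ⟨e i, rfl⟩)
      ((Equiv.sum_comp e (fun i => lam i • z i)).trans hlamx).symm
  · -- exactly F+1 points
    obtain e := (Fintype.equivFinOfCardEq heq).symm
    set p : Fin (F + 1) → E := z ∘ e with hp_def
    set l : Fin (F + 1) → ℝ := lam ∘ e with hl_def
    have hpS : ∀ i, p i ∈ S := fun i => hzS ⟨e i, rfl⟩
    have hlpos : ∀ i, 0 < l i := fun i => hlampos (e i)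
    have hlsum : ∑ i, l i = 1 := (Equiv.sum_comp e lam).trans hlamsum
    have hlx : ∑ i, l i • p i = x := (Equiv.sum_comp e (fun i => lam i • z i)).trans hlamx
    have hpind : AffineIndependent ℝ p := hzind.comp_embedding e.toEmbedding
    have htop : affineSpan ℝ (Set.range p) = ⊤ := by
      rw [hpind.affineSpan_eq_top_iff_card_eq_finrank_add_one]
      simp [hdim]
    set b : AffineBasis (Fin (F + 1)) ℝ E := ⟨p, hpind, htop⟩ with hb_def
    have hb : ∀ i, b i = p i := fun i => rfl
    -- the path from p i0 to p i1
    set i0 : Fin (F + 1) := ⟨0, by omega⟩ with hi0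
    set i1 : Fin (F + 1) := ⟨1, by omega⟩ with hi1
    have hi01 : i1 ≠ i0 := by simp [hi0, hi1, Fin.ext_iff]
    obtain ⟨γ, hγS⟩ : ∃ γ : Path (p i0) (p i1), ∀ t, γ t ∈ S :=
      hpath.joinedIn (p i0) (hpS i0) (p i1) (hpS i1)
    have hγext : ∀ t ∈ Set.Icc (0:ℝ) 1, γ.extend t ∈ S := by
      intro t ht
      rw [γ.extend_apply ht]
      exact hγS _
    -- barycentric coordinates along the path
    set c : Fin (F + 1) → ℝ → ℝ := fun i t => b.coord i (γ.extend t) with hc_def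
    have hccont : ∀ i, Continuous (c i) :=
      fun i => (continuous_barycentric_coord b i).comp γ.continuous_extend
    have hc0 : ∀ i, c i 0 = if i = i0 then 1 else 0 := by
      intro i
      simp only [hc_def, Path.extend_zero]
      split
      · next h => rw [h, ← hb i0]; exact b.coord_apply_eq i0
      · next h => rw [← hb i0]; exact b.coord_apply_ne h
    have hc1 : ∀ i, c i 1 = if i = i1 then 1 else 0 := by
      intro i
      simp only [hc_def, Path.extend_one]
      split
      · next h => rw [h, ← hb i1]; exact b.coord_apply_eq i1
      · next h => rw [← hb i1]; exact b.coord_apply_ne h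
    have hcsum : ∀ t, ∑ i, c i t = 1 := fun t => b.sum_coord_apply_eq_one _
    -- the functions f i and their pointwise min g
    set f : Fin (F + 1) → ℝ → ℝ := fun i t => l i * c i0 t - l i0 * c i t with hf_def
    have hfcont : ∀ i, Continuous (f i) :=
      fun i => (continuous_const.mul (hccont i0)).sub (continuous_const.mul (hccont i))
    have hne : (univ.erase i0).Nonempty := ⟨i1, mem_erase.2 ⟨hi01, mem_univ _⟩⟩
    set g : ℝ → ℝ := fun t => (univ.erase i0).inf' hne (fun i => f i t) with hg_def
    have hgt : ∀ s : ℝ, g s = (univ.erase i0).inf' hne (fun i => f i s) := fun _ => rfl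
    have hgcont : Continuous g := Continuous.finset_inf'_apply hne fun i _ => hfcont i
    have hg0 : 0 < g 0 := by
      rw [hgt, Finset.lt_inf'_iff]
      intro i hi
      have hii : i ≠ i0 := (mem_erase.1 hi).1
      have e1 : c i0 0 = 1 := by rw [hc0 i0, if_pos rfl]
      have e2 : c i 0 = 0 := by rw [hc0 i, if_neg hii]
      have hfi : f i 0 = l i := by simp only [hf_def]; rw [e1, e2]; ring
      rw [hfi]; exact hlpos i
    have hg1 : g 1 < 0 := by
      have hmem : i1 ∈ univ.erase i0 := mem_erase.2 ⟨hi01, mem_univ _⟩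
      have h1 : g 1 ≤ f i1 1 := by rw [hgt]; exact Finset.inf'_le _ hmem
      have e1 : c i0 1 = 0 := by rw [hc1 i0, if_neg (Ne.symm hi01)]
      have e2 : c i1 1 = 1 := by rw [hc1 i1, if_pos rfl]
      have h2 : f i1 1 = - l i0 := by simp only [hf_def]; rw [e1, e2]; ring
      have := hlpos i0
      linarith
    -- intermediate value theorem
    have hivt : (0:ℝ) ∈ g '' Set.Icc 0 1 := by
      apply intermediate_value_Icc' (by norm_num : (0:ℝ) ≤ 1) hgcont.continuousOn
      exact ⟨hg1.le, hg0.le⟩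
    obtain ⟨t, htmem, htg⟩ := hivt
    -- at time t, all f i t ≥ 0 and some f j t = 0
    have hfnn : ∀ i ∈ univ.erase i0, 0 ≤ f i t := by
      intro i hi
      have h := Finset.inf'_le (fun i => f i t) hi
      rw [← hgt, htg] at h
      exact h
    obtain ⟨j, hjmem, hjf⟩ := Finset.exists_mem_eq_inf' hne (fun i => f i t)
    have hj0 : j ≠ i0 := (mem_erase.1 hjmem).1
    have hfj : f j t = 0 := by rw [← hjf, ← hgt, htg]
    -- c i0 t ≥ l i0 > 0
    have hsumerase_l : ∑ i ∈ univ.erase i0, l i = 1 - l i0 := by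
      have := Finset.add_sum_erase univ l (mem_univ i0)
      rw [hlsum] at this; linarith
    have hsumerase_c : ∑ i ∈ univ.erase i0, c i t = 1 - c i0 t := by
      have := Finset.add_sum_erase univ (fun i => c i t) (mem_univ i0)
      rw [hcsum t] at this; linarith
    have hsumf : ∑ i ∈ univ.erase i0, f i t = c i0 t - l i0 := by
      simp only [hf_def]
      rw [Finset.sum_sub_distrib, ← Finset.sum_mul, ← Finset.mul_sum,
        hsumerase_l, hsumerase_c]
      ring
    have hc0t : l i0 ≤ c i0 t := by
      have h := Finset.sum_nonneg hfnn
      rw [hsumf] at h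
      linarith
    have hc0pos : 0 < c i0 t := lt_of_lt_of_le (hlpos i0) hc0t
    -- the new convex combination
    set q : E := γ.extend t with hq_def
    have hqS : q ∈ S := hγext t htmem
    set d : ℝ := l i0 / c i0 t with hd_def
    have hdnn : 0 ≤ d := div_nonneg (hlpos i0).le hc0pos.le
    have h5 : d * c i0 t = l i0 := by rw [hd_def]; exact div_mul_cancel₀ _ hc0pos.ne'
    set μ : Fin (F + 1) → ℝ := fun i => if i = i0 then d else l i - d * c i t with hμ_def
    set P : Fin (F + 1) → E := fun i => if i = i0 then q else p i with hP_def
    have hμ0 : μ i0 = d := if_pos rfl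
    have hP0 : P i0 = q := if_pos rfl
    have hμne' : ∀ i, i ≠ i0 → μ i = l i - d * c i t := fun i hi => if_neg hi
    have hμne : ∀ i, i ≠ i0 → μ i = f i t / c i0 t := by
      intro i hi
      rw [hμne' i hi]
      simp only [hf_def, hd_def]
      field_simp
      try ring
    have hμnn : ∀ i, 0 ≤ μ i := by
      intro i
      by_cases hi : i = i0
      · rw [hi, hμ0]; exact hdnn
      · rw [hμne i hi]
        exact div_nonneg (hfnn i (mem_erase.2 ⟨hi, mem_univ _⟩)) hc0pos.le
    have hμj : μ j = 0 := by rw [hμne j hj0, hfj, zero_div]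
    have hPS : ∀ i, P i ∈ S := by
      intro i
      by_cases hi : i = i0 <;> simp [hP_def, hi, hqS, hpS]
    have hqexp : q = ∑ i, c i t • p i := (b.linear_combination_coord_eq_self q).symm
    -- sum of weights is 1
    have hμsum : ∑ i, μ i = 1 := by
      rw [← Finset.add_sum_erase univ μ (mem_univ i0)]
      have h4 : ∑ i ∈ univ.erase i0, μ i = ∑ i ∈ univ.erase i0, (l i - d * c i t) :=
        Finset.sum_congr rfl fun i hi => hμne' i (mem_erase.1 hi).1
      rw [hμ0, h4, Finset.sum_sub_distrib, ← Finset.mul_sum, hsumerase_l, hsumerase_c]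
      have h7 : d * (1 - c i0 t) = d - l i0 := by rw [mul_sub, mul_one, h5]
      linarith
    -- the combination equals x
    have h1 : μ i0 • P i0 = ∑ i, (d * c i t) • p i := by
      rw [hμ0, hP0, hqexp, Finset.smul_sum]
      simp_rw [smul_smul]
    have h2 : ∀ i ∈ univ.erase i0, μ i • P i = (l i - d * c i t) • p i := by
      intro i hi
      have hi' := (mem_erase.1 hi).1
      simp only [hμ_def, hP_def, if_neg hi']
    have hμx : ∑ i, μ i • P i = x := by
      rw [← Finset.add_sum_erase univ (fun i => μ i • P i) (mem_univ i0),
        Finset.sum_congr rfl h2, h1,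
        ← Finset.add_sum_erase univ (fun i => (d * c i t) • p i) (mem_univ i0), add_assoc,
        ← Finset.sum_add_distrib]
      have h6 : ∀ i ∈ univ.erase i0, (d * c i t) • p i + (l i - d * c i t) • p i = l i • p i := by
        intro i _
        rw [← add_smul]
        congr 1
        ring
      rw [Finset.sum_congr rfl h6, h5, Finset.add_sum_erase univ (fun i => l i • p i) (mem_univ i0)]
      exact hlx
    -- drop index j
    refine ⟨μ ∘ j.succAbove, P ∘ j.succAbove, fun i => hμnn _, ?_, fun i => hPS _, ?_⟩
    · have h := Fin.sum_univ_succAbove μ j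
      rw [hμsum, hμj, zero_add] at h
      exact h.symm
    · have h := Fin.sum_univ_succAbove (fun i => μ i • P i) j
      rw [hμx, hμj, zero_smul, zero_add] at h
      exact h
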